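/- arXiv:2207.10930 — 4 statements merged into one kernel-verified Lean document; each statement's English description precedes it below -/
import Mathlib

section
/- Let K be a totally real number field and let H be a finite set of prime ideals of O_K, none dividing 2, containing a representative of every ideal class of K. Let (a, b, c) ∈ O_K³ be a non-trivial solution of x^p + y^p = 2^r z^p of prime exponent p. Then there exist ξ ∈ K* and m ∈ H such that (a', b', c') := (ξa, ξb, ξc) lies in O_K³, is a solution of x^p + y^p = 2^r z^p, and the ideal a'O_K + b'O_K + c'O_K equals m. -/
open NumberField IsDedekindDomain

open scoped Classical in
/-- The additive `P`-adic valuation on a number field `K`, normalized so that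
`vP P x` is the exponent of `P` in the factorization of `x`, with `vP P 0 = 0`. -/
noncomputable def vP {K : Type} [Field K] [NumberField K]
    (P : HeightOneSpectrum (𝓞 K)) (x : K) : ℤ :=
  if hx : x = 0 then 0
  else - Multiplicative.toAdd (WithZero.unzero ((P.valuation K).ne_zero_iff.mpr hx))


/-- **Scaling a solution so that its ideal of coefficients lies in `H`** (Lemma:
integrality of solution). `H` is a finite set of prime ideals of `O_K`, none dividing `2`,
representing every ideal class of `K`. Any non-trivial solution `(a,b,c)` of
`x^p + y^p = 2^r z^p` can be scaled by some `ξ ∈ K*` to a solution `(a',b',c') ∈ O_K³`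
with `a'O_K + b'O_K + c'O_K = m` for some `m ∈ H`. -/
theorem exists_scaled_solution_with_gcd_in_H
    (K : Type) [Field K] [NumberField K]
    (htotallyReal : ∀ v : InfinitePlace K, v.IsReal)
    (H : Finset (Ideal (𝓞 K)))
    (hHprime : ∀ m ∈ H, m.IsPrime)
    (hHodd : ∀ m ∈ H, ¬ (m ∣ Ideal.span {(2 : 𝓞 K)}))
    (hHrep : ∀ C : ClassGroup (𝓞 K), ∃ m ∈ H,
      ∃ hm : m ∈ nonZeroDivisors (Ideal (𝓞 K)), ClassGroup.mk0 ⟨m, hm⟩ = C)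
    (p : ℕ) (hp : p.Prime) (r : ℕ) (a b c : 𝓞 K)
    (hsol : a ^ p + b ^ p = 2 ^ r * c ^ p)
    (hnontriv : ¬ (a * b * c = 0 ∨ a = b ∨ a = -b)) :
    ∃ (ξ : K) (m : Ideal (𝓞 K)) (a' b' c' : 𝓞 K), ξ ≠ 0 ∧ m ∈ H ∧
      algebraMap (𝓞 K) K a' = ξ * algebraMap (𝓞 K) K a ∧
      algebraMap (𝓞 K) K b' = ξ * algebraMap (𝓞 K) K b ∧
      algebraMap (𝓞 K) K c' = ξ * algebraMap (𝓞 K) K c ∧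
      a' ^ p + b' ^ p = 2 ^ r * c' ^ p ∧
      Ideal.span {a'} ⊔ Ideal.span {b'} ⊔ Ideal.span {c'} = m := by
  push_neg at hnontriv
  obtain ⟨habc, -, -⟩ := hnontriv
  have ha : a ≠ 0 := fun h => habc (by simp [h])
  have hG : (Ideal.span {a} ⊔ Ideal.span {b} ⊔ Ideal.span {c} : Ideal (𝓞 K)) ≠ 0 := by
    intro h
    apply ha
    have : Ideal.span {a} ≤ (0 : Ideal (𝓞 K)) := h ▸ le_sup_of_le_left le_sup_left
    simpa using this (Ideal.mem_span_singleton_self a)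
  obtain ⟨m, hmH, hm, hmk⟩ := hHrep (ClassGroup.mk0
    ⟨Ideal.span {a} ⊔ Ideal.span {b} ⊔ Ideal.span {c},
      mem_nonZeroDivisors_of_ne_zero hG⟩)
  rw [ClassGroup.mk0_eq_mk0_iff] at hmk
  obtain ⟨x, y, hx, hy, hxy⟩ := hmk
  simp only at hxy
  -- For each of a, b, c, obtain the scaled element in m.
  have key : ∀ t : 𝓞 K, t ∈ (Ideal.span {a} ⊔ Ideal.span {b} ⊔ Ideal.span {c} : Ideal (𝓞 K)) →
      ∃ t' ∈ m, x * t' = y * t := by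
    intro t ht
    have : y * t ∈ Ideal.span {x} * m := by
      rw [hxy]
      exact Ideal.mem_span_singleton_mul.mpr ⟨t, ht, rfl⟩
    exact Ideal.mem_span_singleton_mul.mp this
  obtain ⟨a', ha'm, ha'⟩ := key a (Ideal.mem_sup_left (Ideal.mem_sup_left (Ideal.mem_span_singleton_self a)))
  obtain ⟨b', hb'm, hb'⟩ := key b (Ideal.mem_sup_left (Ideal.mem_sup_right (Ideal.mem_span_singleton_self b)))
  obtain ⟨c', hc'm, hc'⟩ := key c (Ideal.mem_sup_right (Ideal.mem_span_singleton_self c))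
  have hinj : Function.Injective (algebraMap (𝓞 K) K) := IsFractionRing.injective _ _
  have hxK : algebraMap (𝓞 K) K x ≠ 0 := fun h => hx (hinj (by simpa using h))
  have hyK : algebraMap (𝓞 K) K y ≠ 0 := fun h => hy (hinj (by simpa using h))
  refine ⟨algebraMap (𝓞 K) K y / algebraMap (𝓞 K) K x, m, a', b', c',
    div_ne_zero hyK hxK, hmH, ?_, ?_, ?_, ?_, ?_⟩
  · have := congrArg (algebraMap (𝓞 K) K) ha'
    push_cast at this
    field_simp
    linear_combination this
  · have := congrArg (algebraMap (𝓞 K) K) hb'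
    push_cast at this
    field_simp
    linear_combination this
  · have := congrArg (algebraMap (𝓞 K) K) hc'
    push_cast at this
    field_simp
    linear_combination this
  · have hcancel : x ^ p * (a' ^ p + b' ^ p) = x ^ p * (2 ^ r * c' ^ p) := by
      calc x ^ p * (a' ^ p + b' ^ p) = (x * a') ^ p + (x * b') ^ p := by ring
        _ = (y * a) ^ p + (y * b) ^ p := by rw [ha', hb']
        _ = y ^ p * (a ^ p + b ^ p) := by ring
        _ = y ^ p * (2 ^ r * c ^ p) := by rw [hsol]
        _ = 2 ^ r * (y * c) ^ p := by ring
        _ = 2 ^ r * (x * c') ^ p := by rw [hc']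
        _ = x ^ p * (2 ^ r * c' ^ p) := by ring
    exact mul_left_cancel₀ (pow_ne_zero p hx) hcancel
  · have hxI : (Ideal.span {x} : Ideal (𝓞 K)) ≠ 0 := by
      simpa [Ideal.span_singleton_eq_bot] using hx
    refine mul_left_cancel₀ hxI ?_
    calc Ideal.span {x} * (Ideal.span {a'} ⊔ Ideal.span {b'} ⊔ Ideal.span {c'})
        = Ideal.span {x * a'} ⊔ Ideal.span {x * b'} ⊔ Ideal.span {x * c'} := by
          rw [Ideal.mul_sup, Ideal.mul_sup, Ideal.span_singleton_mul_span_singleton,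
            Ideal.span_singleton_mul_span_singleton, Ideal.span_singleton_mul_span_singleton]
      _ = Ideal.span {y * a} ⊔ Ideal.span {y * b} ⊔ Ideal.span {y * c} := by
          rw [ha', hb', hc']
      _ = Ideal.span {y} * (Ideal.span {a} ⊔ Ideal.span {b} ⊔ Ideal.span {c}) := by
          rw [Ideal.mul_sup, Ideal.mul_sup, Ideal.span_singleton_mul_span_singleton,
            Ideal.span_singleton_mul_span_singleton, Ideal.span_singleton_mul_span_singleton]
      _ = Ideal.span {x} * m := hxy.symm
end

section
/- Let K be a totally real number field of degree n = [K : ℚ] in which 2 is inert, with q = 2O_K the prime above 2, and let l > 5 be a rational prime with gcd(n, l−1) = 1 such that l is totally ramified in K. Then every solution (λ, μ) of the S_K-unit equation λ + μ = 1 with λ, μ ∈ O_{S_K}^* satisfies max(|v_q(λ)|, |v_q(μ)|) = 1. -/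
open NumberField IsDedekindDomain

open NumberField IsDedekindDomain IsDedekindDomain.HeightOneSpectrum

open scoped Classical in
theorem my_le_of_count_le {α : Type*} [CommMonoidWithZero α] [IsCancelMulZero α]
    [UniqueFactorizationMonoid α] {a b : Associates α}
    (ha : a ≠ 0) (hb : b ≠ 0)
    (h : ∀ p : Associates α, Irreducible p → p.count a.factors ≤ p.count b.factors) :
    a ≤ b := by
  obtain ⟨sa, h_sa⟩ := Associates.factors_eq_some_iff_ne_zero.mpr ha
  obtain ⟨sb, h_sb⟩ := Associates.factors_eq_some_iff_ne_zero.mpr hb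
  rw [← Associates.factors_le, h_sa, h_sb, WithTop.coe_le_coe, Multiset.le_iff_count]
  rintro ⟨p, hp⟩
  have := h p hp
  rwa [h_sa, h_sb, Associates.count_some hp, Associates.count_some hp] at this

open scoped Classical in
theorem my_dvd_of_intValuation_le {R : Type*} [CommRing R] [IsDedekindDomain R]
    {r s : R} (hr : r ≠ 0) (hs : s ≠ 0)
    (h : ∀ v : HeightOneSpectrum R, v.intValuation r ≤ v.intValuation s) : s ∣ r := by
  rw [← Ideal.span_singleton_le_span_singleton, ← Ideal.dvd_iff_le,
    ← Associates.mk_le_mk_iff_dvd]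
  have hrz : Associates.mk (Ideal.span {r} : Ideal R) ≠ 0 := by
    rw [Associates.mk_ne_zero, Ideal.zero_eq_bot, Ne, Ideal.span_singleton_eq_bot]; exact hr
  have hsz : Associates.mk (Ideal.span {s} : Ideal R) ≠ 0 := by
    rw [Associates.mk_ne_zero, Ideal.zero_eq_bot, Ne, Ideal.span_singleton_eq_bot]; exact hs
  apply my_le_of_count_le hsz hrz
  intro p hp
  -- p is the class of a height one prime
  obtain ⟨I, hI⟩ := Associates.exists_rep p
  have hIirr : Irreducible I := by rwa [← Associates.irreducible_mk, hI]
  have hIprime : Prime I := UniqueFactorizationMonoid.irreducible_iff_prime.mp hIirr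
  have hIbot : I ≠ ⊥ := hIprime.ne_zero
  have hIp : I.IsPrime := Ideal.isPrime_of_prime hIprime
  set v : HeightOneSpectrum R := ⟨I, hIp, hIbot⟩ with hv
  have hvr := h v
  rw [intValuation_apply, intValuation_apply, v.intValuationDef_if_neg hr,
    v.intValuationDef_if_neg hs] at hvr
  rw [WithZero.exp_le_exp, neg_le_neg_iff, Int.ofNat_le] at hvr
  simp [hv, hI] at hvr
  convert hvr

theorem my_exists_algebraMap_eq {R : Type*} [CommRing R] [IsDedekindDomain R]
    {K : Type*} [Field K] [Algebra R K] [IsFractionRing R K] (x : K) (hx0 : x ≠ 0)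
    (hx : ∀ v : HeightOneSpectrum R, v.valuation K (x : K) ≤ 1) :
    ∃ r : R, algebraMap R K r = x := by
  obtain ⟨r, s, hs, hdiv⟩ := IsFractionRing.div_surjective (A := R) x
  have hs0 : s ≠ 0 := nonZeroDivisors.ne_zero hs
  have hr0 : r ≠ 0 := by
    rintro rfl
    rw [map_zero, zero_div] at hdiv
    exact hx0 hdiv.symm
  have hdvd : s ∣ r := by
    apply my_dvd_of_intValuation_le hr0 hs0
    intro v
    have hv := hx v
    rw [← hdiv, map_div₀, valuation_of_algebraMap, valuation_of_algebraMap] at hv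
    have hsv : v.intValuation s ≠ 0 := v.intValuation_ne_zero s hs0
    rwa [div_le_one₀ (zero_lt_iff.mpr hsv)] at hv
  obtain ⟨c, rfl⟩ := hdvd
  refine ⟨c, ?_⟩
  have hφs : algebraMap R K s ≠ 0 := fun hc => hs0 (IsFractionRing.to_map_eq_zero_iff.mp hc)
  rw [← hdiv, map_mul, mul_div_cancel_left₀ _ hφs]

theorem my_exists_unit {R : Type*} [CommRing R] [IsDedekindDomain R]
    {K : Type*} [Field K] [Algebra R K] [IsFractionRing R K] (x : Kˣ)
    (hx : ∀ v : HeightOneSpectrum R, v.valuation K ((x : K)) = 1) :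
    ∃ u : Rˣ, algebraMap R K u = (x : K) := by
  obtain ⟨r, hr⟩ := my_exists_algebraMap_eq (x : K) x.ne_zero fun v => (hx v).le
  have hxinv : ∀ v : HeightOneSpectrum R, v.valuation K (((x⁻¹ : Kˣ) : K)) ≤ 1 := by
    intro v
    rw [Units.val_inv_eq_inv_val, map_inv₀, hx v, inv_one]
  obtain ⟨r', hr'⟩ := my_exists_algebraMap_eq (R := R) ((x⁻¹ : Kˣ) : K) (x⁻¹).ne_zero hxinv
  have hrr' : r * r' = 1 := by
    refine IsFractionRing.injective R K ?_
    rw [map_mul, hr, hr', map_one, Units.val_inv_eq_inv_val, mul_inv_cancel₀ x.ne_zero]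
  exact ⟨⟨r, r', hrr', by rwa [mul_comm] at hrr'⟩, hr⟩
set_option maxHeartbeats 1000000 in
set_option synthInstance.maxHeartbeats 1000000 in
theorem my_charP {K : Type} [Field K] [NumberField K] {n l : ℕ}
    (hl : l.Prime) (hn1 : 0 < n)
    {q' : Ideal (𝓞 K)} (hq'p : q'.IsPrime) (hq'pow : Ideal.span {(l : 𝓞 K)} = q' ^ n) :
    CharP ((𝓞 K) ⧸ q') l := by
  haveI : Nontrivial ((𝓞 K) ⧸ q') := Ideal.Quotient.nontrivial_iff.mpr hq'p.ne_top
  have hlmem : (l : 𝓞 K) ∈ q' :=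
    Ideal.pow_le_self hn1.ne' (hq'pow ▸ Ideal.mem_span_singleton_self _)
  have hlF : ((l : ℕ) : (𝓞 K) ⧸ q') = 0 := by
    rw [← map_natCast (Ideal.Quotient.mk q') l, Ideal.Quotient.eq_zero_iff_mem]; exact hlmem
  have hdvd : ringChar ((𝓞 K) ⧸ q') ∣ l := ringChar.dvd hlF
  rcases hl.eq_one_or_self_of_dvd _ hdvd with h | h
  · exact absurd h CharP.ringChar_ne_one
  · exact ringChar.of_eq h

theorem my_card {K : Type} [Field K] [NumberField K] {n l : ℕ}
    (hn1 : 0 < n) (hnr : Module.finrank ℤ (𝓞 K) = n)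
    {q' : Ideal (𝓞 K)} (hq'pow : Ideal.span {(l : 𝓞 K)} = q' ^ n) :
    Nat.card ((𝓞 K) ⧸ q') = l := by
  classical
  have hnorm : Algebra.norm ℤ ((l : ℕ) : 𝓞 K) = (l : ℤ) ^ n := by
    set B := Module.Free.chooseBasis ℤ (𝓞 K)
    rw [Algebra.norm_eq_matrix_det B]
    have h1 : (Algebra.leftMulMatrix B) ((l : ℕ) : 𝓞 K)
        = ((l : ℕ) : Matrix (Module.Free.ChooseBasisIndex ℤ (𝓞 K))
            (Module.Free.ChooseBasisIndex ℤ (𝓞 K)) ℤ) := map_natCast _ l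
    have h2 : ((l : ℕ) : Matrix (Module.Free.ChooseBasisIndex ℤ (𝓞 K))
        (Module.Free.ChooseBasisIndex ℤ (𝓞 K)) ℤ) = ((l : ℕ) : ℤ) • 1 := by
      rw [Matrix.smul_one_eq_diagonal]; rfl
    rw [h1, h2, Matrix.det_smul, Matrix.det_one, mul_one,
      ← Module.finrank_eq_card_chooseBasisIndex, hnr]
  have habs : Ideal.absNorm q' ^ n = l ^ n := by
    rw [← map_pow, ← hq'pow, Ideal.absNorm_span_singleton, hnorm, Int.natAbs_pow]
    simp
  have habs' : Ideal.absNorm q' = l := Nat.pow_left_injective hn1.ne' habs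
  rw [← Submodule.cardQuot_apply, ← Ideal.absNorm_apply, habs']

theorem my_norm_unit_eq_one {K : Type} [Field K] [NumberField K]
    (ε : (𝓞 K)ˣ) (h4 : (ε : 𝓞 K) - 1 ∈ Ideal.span {(4 : 𝓞 K)}) :
    Algebra.norm ℤ (ε : 𝓞 K) = 1 := by
  classical
  set B := Module.Free.chooseBasis ℤ (𝓞 K)
  set ι := Module.Free.ChooseBasisIndex ℤ (𝓞 K)
  set T : (𝓞 K) →+* Matrix ι ι (ZMod 4) :=
    ((Int.castRingHom (ZMod 4)).mapMatrix).comp (Algebra.leftMulMatrix B).toRingHom with hT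
  have hdetT : ∀ r : 𝓞 K, (T r).det = ((Algebra.norm ℤ r : ℤ) : ZMod 4) := by
    intro r
    rw [Algebra.norm_eq_matrix_det B]
    exact (RingHom.map_det (Int.castRingHom (ZMod 4)) (Algebra.leftMulMatrix B r)).symm
  obtain ⟨y, hy⟩ := Ideal.mem_span_singleton.mp h4
  have hT4 : T (4 : 𝓞 K) = 0 := by
    have h40 : ((4 : ℕ) : 𝓞 K) = (4 : 𝓞 K) := by norm_num
    have h2 : ((4 : ℕ) : Matrix ι ι (ZMod 4)) = ((4 : ℕ) : ZMod 4) • 1 := by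
      rw [Matrix.smul_one_eq_diagonal]; rfl
    have h3 : ((4 : ℕ) : ZMod 4) = 0 := by decide
    rw [← h40, map_natCast, h2, h3, zero_smul]
  have hTe : T (ε : 𝓞 K) = 1 := by
    have h5 : (ε : 𝓞 K) = 1 + 4 * y := by rw [← hy]; ring
    rw [h5, map_add, map_one, map_mul, hT4, zero_mul, add_zero]
  have h6 : ((Algebra.norm ℤ (ε : 𝓞 K) : ℤ) : ZMod 4) = 1 := by
    rw [← hdetT, hTe, Matrix.det_one]
  have hNunit : IsUnit (Algebra.norm ℤ (ε : 𝓞 K)) := ε.isUnit.map (Algebra.norm ℤ)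
  rcases Int.isUnit_iff.mp hNunit with hN | hN
  · exact hN
  · rw [hN] at h6
    have : ((-1 : ℤ) : ZMod 4) ≠ 1 := by decide
    exact absurd h6 this
set_option maxHeartbeats 1600000 in
set_option synthInstance.maxHeartbeats 1000000 in
theorem my_unit_residue {K : Type} [Field K] [NumberField K] {n l : ℕ}
    (hl : l.Prime) (hn1 : 0 < n) (hodd : Odd n) (hgcd : Nat.gcd n (l - 1) = 1)
    (hnr : Module.finrank ℤ (𝓞 K) = n)
    {q' : Ideal (𝓞 K)} (hq'p : q'.IsPrime) (hq'bot : q' ≠ ⊥)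
    (hq'pow : Ideal.span {(l : 𝓞 K)} = q' ^ n)
    (u : (𝓞 K)ˣ) :
    Ideal.Quotient.mk q' (u : 𝓞 K) = ((Algebra.norm ℤ (u : 𝓞 K) : ℤ) : (𝓞 K) ⧸ q') := by
  classical
  haveI hFact : Fact l.Prime := ⟨hl⟩
  haveI hmax : q'.IsMaximal := hq'p.isMaximal hq'bot
  letI : Field ((𝓞 K) ⧸ q') := Ideal.Quotient.field q'
  haveI hchar : CharP ((𝓞 K) ⧸ q') l := my_charP hl hn1 hq'p hq'pow
  have hcard : Nat.card ((𝓞 K) ⧸ q') = l := my_card hn1 hnr hq'pow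
  haveI : Finite ((𝓞 K) ⧸ q') := Nat.finite_of_card_ne_zero (by rw [hcard]; exact hl.ne_zero)
  letI : Fintype ((𝓞 K) ⧸ q') := Fintype.ofFinite _
  have hcardF : Fintype.card ((𝓞 K) ⧸ q') = l := by rw [← Nat.card_eq_fintype_card, hcard]
  set c : (𝓞 K) ⧸ q' := Ideal.Quotient.mk q' (u : 𝓞 K) with hc
  have hcunit : IsUnit c := u.isUnit.map (Ideal.Quotient.mk q')
  have hc0 : c ≠ 0 := hcunit.ne_zero
  obtain ⟨m, hm⟩ : ∃ m : ℤ, ((m : ℤ) : (𝓞 K) ⧸ q') = c := by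
    have hbij : Function.Bijective (ZMod.castHom (dvd_refl l) ((𝓞 K) ⧸ q')) := by
      rw [Fintype.bijective_iff_injective_and_card]
      exact ⟨(ZMod.castHom (dvd_refl l) ((𝓞 K) ⧸ q')).injective, by rw [ZMod.card, hcardF]⟩
    obtain ⟨c', hc'⟩ := hbij.surjective c
    obtain ⟨m, hm⟩ := ZMod.intCast_surjective c'
    exact ⟨m, by rw [← hc', ← hm, map_intCast]⟩
  set ι := Module.Free.ChooseBasisIndex ℤ (𝓞 K)
  set B := Module.Free.chooseBasis ℤ (𝓞 K)
  have hcι : Fintype.card ι = n := by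
    rw [← Module.finrank_eq_card_chooseBasisIndex, hnr]
  haveI : Nonempty ι := Fintype.card_pos_iff.mp (by rw [hcι]; exact hn1)
  set T : (𝓞 K) →+* Matrix ι ι ((𝓞 K) ⧸ q') :=
    ((Int.castRingHom ((𝓞 K) ⧸ q')).mapMatrix).comp (Algebra.leftMulMatrix B).toRingHom with hT
  have hdetT : ∀ r : 𝓞 K, (T r).det = ((Algebra.norm ℤ r : ℤ) : (𝓞 K) ⧸ q') := by
    intro r
    rw [Algebra.norm_eq_matrix_det B]
    exact (RingHom.map_det (Int.castRingHom ((𝓞 K) ⧸ q')) (Algebra.leftMulMatrix B r)).symm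
  set D : Matrix ι ι ((𝓞 K) ⧸ q') := T ((u : 𝓞 K) - ((m : ℤ) : 𝓞 K)) with hD
  have hmem : ((u : 𝓞 K) - ((m : ℤ) : 𝓞 K)) ∈ q' := by
    rw [← Ideal.Quotient.eq_zero_iff_mem, map_sub, map_intCast, hm, ← hc, sub_self]
  have hDn : D ^ n = 0 := by
    have h1 : ((u : 𝓞 K) - ((m : ℤ) : 𝓞 K)) ^ n ∈ Ideal.span {(l : 𝓞 K)} := by
      rw [hq'pow]; exact Ideal.pow_mem_pow hmem n
    obtain ⟨y, hy⟩ := Ideal.mem_span_singleton.mp h1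
    have hTl : T ((l : ℕ) : 𝓞 K) = 0 := by
      have h2 : ((l : ℕ) : Matrix ι ι ((𝓞 K) ⧸ q')) = ((l : ℕ) : (𝓞 K) ⧸ q') • 1 := by
        rw [Matrix.smul_one_eq_diagonal]; rfl
      have hl0 : ((l : ℕ) : (𝓞 K) ⧸ q') = 0 := (CharP.cast_eq_zero_iff _ l l).mpr dvd_rfl
      rw [map_natCast, h2, hl0, zero_smul]
    rw [hD, ← map_pow, hy, map_mul, hTl, zero_mul]
  have hTu : T (u : 𝓞 K) = c • (1 : Matrix ι ι ((𝓞 K) ⧸ q')) + D := by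
    have h4 : (u : 𝓞 K) = ((m : ℤ) : 𝓞 K) + ((u : 𝓞 K) - ((m : ℤ) : 𝓞 K)) := by ring
    calc T (u : 𝓞 K) = T ((m : ℤ) : 𝓞 K) + T ((u : 𝓞 K) - ((m : ℤ) : 𝓞 K)) := by
          rw [← map_add, ← h4]
      _ = c • (1 : Matrix ι ι ((𝓞 K) ⧸ q')) + D := by
          rw [map_intCast, hD]
          congr 1
          rw [← hm, Matrix.smul_one_eq_diagonal]
          rfl
  have hdetu : (T (u : 𝓞 K)).det = c ^ n := by
    have hsplit : c • (1 : Matrix ι ι ((𝓞 K) ⧸ q')) + D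
        = c • ((1 : Matrix ι ι ((𝓞 K) ⧸ q')) + c⁻¹ • D) := by
      rw [smul_add, smul_smul, mul_inv_cancel₀ hc0, one_smul]
    rw [hTu, hsplit, Matrix.det_smul, hcι]
    have hE : (c⁻¹ • D) ^ n = 0 := by rw [smul_pow, hDn, smul_zero]
    have hdet1 : ((1 : Matrix ι ι ((𝓞 K) ⧸ q')) + c⁻¹ • D).det = 1 := by
      haveI : CharP (Matrix ι ι ((𝓞 K) ⧸ q')) l := Matrix.charP l
      have hpow : ((1 : Matrix ι ι ((𝓞 K) ⧸ q')) + c⁻¹ • D) ^ (l ^ n) = 1 := by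
        rw [add_pow_char_pow_of_commute l n (Commute.one_left _)]
        have h5 : (c⁻¹ • D) ^ (l ^ n) = 0 := by
          have h6 : l ^ n = n + (l ^ n - n) := by
            have := (Nat.lt_pow_self (n := n) hl.one_lt).le
            omega
          rw [h6, pow_add, hE, zero_mul]
        rw [h5, one_pow, add_zero]
      have hd : ((1 : Matrix ι ι ((𝓞 K) ⧸ q')) + c⁻¹ • D).det ^ (l ^ n) = 1 := by
        rw [← Matrix.det_pow, hpow, Matrix.det_one]
      calc ((1 : Matrix ι ι ((𝓞 K) ⧸ q')) + c⁻¹ • D).det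
          = ((1 : Matrix ι ι ((𝓞 K) ⧸ q')) + c⁻¹ • D).det ^ (l ^ n) := by
            conv_lhs => rw [← FiniteField.pow_card_pow n
              (((1 : Matrix ι ι ((𝓞 K) ⧸ q')) + c⁻¹ • D).det), hcardF]
        _ = 1 := hd
    rw [hdet1, mul_one]
  have hkey : c ^ n = ((Algebra.norm ℤ (u : 𝓞 K) : ℤ) : (𝓞 K) ⧸ q') := by
    rw [← hdetu, hdetT]
  have horder : ∀ d : (𝓞 K) ⧸ q', d ≠ 0 → d ^ n = 1 → d = 1 := by
    intro d hd0 hdn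
    set du : ((𝓞 K) ⧸ q')ˣ := Units.mk0 d hd0 with hdu
    have h1 : du ^ n = 1 := by
      ext
      rw [Units.val_pow_eq_pow_val]
      exact hdn
    have h2 : du ^ (l - 1) = 1 := by
      ext
      rw [Units.val_pow_eq_pow_val]
      have h2' := FiniteField.pow_card_sub_one_eq_one d hd0
      rwa [hcardF] at h2'
    have h3 : orderOf du ∣ Nat.gcd n (l - 1) :=
      Nat.dvd_gcd (orderOf_dvd_of_pow_eq_one h1) (orderOf_dvd_of_pow_eq_one h2)
    rw [hgcd, Nat.dvd_one] at h3
    have h7 := orderOf_eq_one_iff.mp h3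
    have : du.val = 1 := by rw [h7]; rfl
    simpa [hdu] using this
  have hNunit : IsUnit (Algebra.norm ℤ (u : 𝓞 K)) := u.isUnit.map (Algebra.norm ℤ)
  rcases Int.isUnit_iff.mp hNunit with hN | hN
  · rw [hN] at hkey ⊢
    have hc1 : c ^ n = 1 := by rw [hkey]; push_cast; ring
    have h10 := horder c hc0 hc1
    rw [h10]; push_cast; ring
  · rw [hN] at hkey ⊢
    have hc1 : (-c) ^ n = 1 := by
      rw [hodd.neg_pow, hkey]; push_cast; ring
    have h8 := horder (-c) (neg_ne_zero.mpr hc0) hc1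
    have h9 : c = -1 := by rw [← neg_neg c, h8]
    rw [h9]; push_cast; ring
open IsDedekindDomain.HeightOneSpectrum in
set_option maxHeartbeats 1600000 in
set_option synthInstance.maxHeartbeats 1000000 in
/-- **`S_K`-unit bound when `2` is inert and some `l` is totally ramified**. `K` is a
totally real number field of degree `n` in which `2` is inert, with `q = 2O_K` the prime
above `2`, and `l > 5` is a rational prime with `gcd(n, l - 1) = 1` which is totally
ramified in `K`. Then every solution of the `S_K`-unit equation `λ + μ = 1` satisfies
`max(|v_q λ|, |v_q μ|) = 1`. -/
theorem sunit_bound_of_two_inert_totally_ramified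
    (K : Type) [Field K] [NumberField K]
    (htotallyReal : ∀ v : InfinitePlace K, v.IsReal)
    (n : ℕ) (hn : n = Module.finrank ℚ K)
    (l : ℕ) (hl : l.Prime) (hl5 : 5 < l) (hgcd : Nat.gcd n (l - 1) = 1)
    (hram : ∃ q' : Ideal (𝓞 K), q'.IsPrime ∧ Ideal.span {(l : 𝓞 K)} = q' ^ n)
    (q : HeightOneSpectrum (𝓞 K)) (hq : q.asIdeal = Ideal.span {(2 : 𝓞 K)})
    (SK : Set (HeightOneSpectrum (𝓞 K)))
    (hSK : SK = {P : HeightOneSpectrum (𝓞 K) | (2 : 𝓞 K) ∈ P.asIdeal}) :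
    ∀ lam mu : Kˣ, lam ∈ SK.unit K → mu ∈ SK.unit K →
      (lam : K) + (mu : K) = 1 →
      max |vP q (lam : K)| |vP q (mu : K)| = 1 := by
  classical
  obtain ⟨q', hq'p, hq'pow⟩ := hram
  intro lam mu hlam hmu heq
  -- numerics
  have hn1 : 0 < n := by rw [hn]; exact Module.finrank_pos
  have hnr : Module.finrank ℤ (𝓞 K) = n := by rw [NumberField.RingOfIntegers.rank, hn]
  have hl2 : l ≠ 2 := by omega
  have hlodd : Odd l := hl.odd_of_ne_two hl2
  have h2dvd : 2 ∣ l - 1 := by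
    obtain ⟨k, hk⟩ := hlodd
    omega
  have hodd : Odd n := by
    rw [← Nat.not_even_iff_odd]
    intro heven
    have : (2 : ℕ) ∣ Nat.gcd n (l - 1) := Nat.dvd_gcd heven.two_dvd h2dvd
    rw [hgcd] at this
    omega
  have hq'bot : q' ≠ ⊥ := by
    rintro rfl
    rw [← Ideal.zero_eq_bot, zero_pow hn1.ne'] at hq'pow
    rw [Ideal.zero_eq_bot, Ideal.span_singleton_eq_bot] at hq'pow
    have : (l : 𝓞 K) ≠ 0 := Nat.cast_ne_zero.mpr hl.ne_zero
    exact this hq'pow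
  -- residue field facts
  haveI : Nontrivial ((𝓞 K) ⧸ q') := Ideal.Quotient.nontrivial_iff.mpr hq'p.ne_top
  haveI : IsDomain ((𝓞 K) ⧸ q') := Ideal.Quotient.isDomain q'
  haveI hchar : CharP ((𝓞 K) ⧸ q') l := my_charP hl hn1 hq'p hq'pow
  have h2F : ((2 : ℕ) : (𝓞 K) ⧸ q') ≠ 0 := by
    rw [Ne, CharP.cast_eq_zero_iff _ l 2]
    intro hdvd
    have := Nat.le_of_dvd (by norm_num) hdvd
    omega
  have h3F : ((3 : ℕ) : (𝓞 K) ⧸ q') ≠ 0 := by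
    rw [Ne, CharP.cast_eq_zero_iff _ l 3]
    intro hdvd
    have := Nat.le_of_dvd (by norm_num) hdvd
    omega
  -- SK = {q}
  have hq2mem : (2 : 𝓞 K) ∈ q.asIdeal := by
    rw [hq]; exact Ideal.mem_span_singleton_self _
  haveI hqmax : q.asIdeal.IsMaximal := q.isPrime.isMaximal q.ne_bot
  have hSKq : SK = {q} := by
    rw [hSK]
    ext P
    simp only [Set.mem_setOf_eq, Set.mem_singleton_iff]
    constructor
    · intro h2P
      have hle : q.asIdeal ≤ P.asIdeal := by
        rw [hq, Ideal.span_le, Set.singleton_subset_iff]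
        exact h2P
      have hPq : q.asIdeal = P.asIdeal := hqmax.eq_of_le P.isPrime.ne_top hle
      exact HeightOneSpectrum.ext hPq.symm
    · rintro rfl
      exact hq2mem
  -- valuation bookkeeping
  have h2K : (2 : K) ≠ 0 := two_ne_zero
  have hφ2 : algebraMap (𝓞 K) K (2 : 𝓞 K) = (2 : K) := map_ofNat _ 2
  have hvP : ∀ (x : K) (hx : x ≠ 0),
      q.valuation K x
        = ((Multiplicative.ofAdd (-(vP q x)) : Multiplicative ℤ) : WithZero (Multiplicative ℤ)) := by
    intro x hx
    unfold vP
    rw [dif_neg hx, neg_neg, ofAdd_toAdd, WithZero.coe_unzero]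
  have hv2 : q.valuation K (2 : K)
      = ((Multiplicative.ofAdd (-1 : ℤ) : Multiplicative ℤ) : WithZero (Multiplicative ℤ)) := by
    rw [← hφ2, valuation_of_algebraMap]
    exact q.intValuation_singleton two_ne_zero hq
  have hv2' : ∀ v : HeightOneSpectrum (𝓞 K), v ≠ q → v.valuation K (2 : K) = 1 := by
    intro v hv
    have h2v : (2 : 𝓞 K) ∉ v.asIdeal := by
      intro hmem
      apply hv
      have hvSK : v ∈ SK := by rw [hSK]; exact hmem
      rwa [hSKq, Set.mem_singleton_iff] at hvSK
    rw [← hφ2]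
    rcases lt_or_eq_of_le (v.valuation_le_one (K := K) (2 : 𝓞 K)) with hlt | heq1
    · exfalso
      rw [valuation_lt_one_iff_dvd, Ideal.dvd_span_singleton] at hlt
      exact h2v hlt
    · exact heq1
  -- decomposition of S-units
  have hdecomp : ∀ x : Kˣ, x ∈ SK.unit K →
      ∃ u : (𝓞 K)ˣ,
        (x : K) = algebraMap (𝓞 K) K u * (2 : K) ^ (vP q (x : K)) := by
    intro x hx
    have hxv : ∀ v : HeightOneSpectrum (𝓞 K), v ≠ q → v.valuation K (x : K) = 1 := by
      intro v hv
      refine Set.unit_valuation_eq_one SK K ⟨x, hx⟩ ?_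
      rw [hSKq]
      simpa using hv
    set a : ℤ := vP q (x : K) with ha
    set y : Kˣ := x * (Units.mk0 (2 : K) h2K) ^ (-a) with hy
    have hyK : (y : K) = (x : K) * (2 : K) ^ (-a) := by
      rw [hy, Units.val_mul, Units.val_zpow_eq_zpow_val, Units.val_mk0]
    have hyval : ∀ v : HeightOneSpectrum (𝓞 K), v.valuation K ((y : K)) = 1 := by
      intro v
      rw [hyK, map_mul, map_zpow₀]
      by_cases hvq : v = q
      · subst hvq
        rw [hvP (x : K) x.ne_zero, hv2, ← ha, ← WithZero.coe_zpow, ← WithZero.coe_mul,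
          ← ofAdd_zsmul, ← ofAdd_add]
        norm_num
      · rw [hxv v hvq, hv2' v hvq, one_zpow, one_mul]
    obtain ⟨u, hu⟩ := my_exists_unit y hyval
    refine ⟨u, ?_⟩
    rw [hu, hyK, mul_assoc, ← zpow_add₀ h2K, neg_add_cancel, zpow_zero, mul_one]
  obtain ⟨u, hlu⟩ := hdecomp lam hlam
  obtain ⟨w, hmw⟩ := hdecomp mu hmu
  set a : ℤ := vP q ((lam : Kˣ) : K) with ha
  set b : ℤ := vP q ((mu : Kˣ) : K) with hb
  -- the master R-equation
  have hinj := IsFractionRing.injective (𝓞 K) K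
  have hmaster : ∀ c : ℤ, 0 ≤ a + c → 0 ≤ b + c → 0 ≤ c →
      (2 : 𝓞 K) ^ ((a + c).toNat) * (u : 𝓞 K) + (2 : 𝓞 K) ^ ((b + c).toNat) * (w : 𝓞 K)
        = (2 : 𝓞 K) ^ (c.toNat) := by
    intro c hac hbc hc
    apply hinj
    rw [map_add, map_mul, map_mul, map_pow, map_pow, map_pow, hφ2]
    have e1 : ((2 : K)) ^ ((a + c).toNat) = (2 : K) ^ (a + c) := by
      rw [← zpow_natCast, Int.toNat_of_nonneg hac]
    have e2 : ((2 : K)) ^ ((b + c).toNat) = (2 : K) ^ (b + c) := by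
      rw [← zpow_natCast, Int.toNat_of_nonneg hbc]
    have e3 : ((2 : K)) ^ (c.toNat) = (2 : K) ^ c := by
      rw [← zpow_natCast, Int.toNat_of_nonneg hc]
    rw [e1, e2, e3, zpow_add₀ h2K, zpow_add₀ h2K]
    calc (2 : K) ^ a * (2 : K) ^ c * (algebraMap (𝓞 K) K u)
          + (2 : K) ^ b * (2 : K) ^ c * (algebraMap (𝓞 K) K w)
        = ((algebraMap (𝓞 K) K u) * (2 : K) ^ a
            + (algebraMap (𝓞 K) K w) * (2 : K) ^ b) * (2 : K) ^ c := by ring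
      _ = (2 : K) ^ c := by rw [← hlu, ← hmw, heq, one_mul]
  -- residue tools
  have hres : ∀ x : (𝓞 K)ˣ,
      Ideal.Quotient.mk q' (x : 𝓞 K)
        = ((Algebra.norm ℤ (x : 𝓞 K) : ℤ) : (𝓞 K) ⧸ q') :=
    fun x => my_unit_residue hl hn1 hodd hgcd hnr hq'p hq'bot hq'pow x
  have hNpm : ∀ x : (𝓞 K)ˣ,
      Algebra.norm ℤ (x : 𝓞 K) = 1 ∨ Algebra.norm ℤ (x : 𝓞 K) = -1 :=
    fun x => Int.isUnit_iff.mp (x.isUnit.map (Algebra.norm ℤ))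
  have hπ2 : Ideal.Quotient.mk q' (2 : 𝓞 K) = ((2 : ℕ) : (𝓞 K) ⧸ q') := by
    push_cast
    rfl
  have hunitres0 : ∀ x : (𝓞 K)ˣ, Ideal.Quotient.mk q' (x : 𝓞 K) ≠ 0 :=
    fun x => (x.isUnit.map (Ideal.Quotient.mk q')).ne_zero
  -- unit cannot be in q
  have hunitq : ∀ x : (𝓞 K)ˣ, (x : 𝓞 K) ∈ q.asIdeal → False := fun x hx =>
    q.isPrime.ne_top (Ideal.eq_top_of_isUnit_mem _ hx x.isUnit)
  -- case analysis
  by_cases ha0 : 0 ≤ a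
  · by_cases hb0 : 0 ≤ b
    · -- both nonnegative
      have hmain := hmaster 0 (by omega) (by omega) le_rfl
      simp only [add_zero, Int.toNat_zero, pow_zero] at hmain
      rcases Nat.eq_zero_or_pos (a.toNat) with hα | hα
      · rcases Nat.eq_zero_or_pos (b.toNat) with hβ | hβ
        · -- both units : impossible
          exfalso
          have haz : a = 0 := by omega
          have hbz : b = 0 := by omega
          rw [hα, hβ, pow_zero, one_mul, one_mul] at hmain
          have hπ := congrArg (Ideal.Quotient.mk q') hmain
          rw [map_add, map_one, hres u, hres w] at hπ
          rcases hNpm u with hu1 | hu1 <;> rcases hNpm w with hw1 | hw1 <;>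
            rw [hu1, hw1] at hπ <;> push_cast at hπ
          · exact one_ne_zero (α := (𝓞 K) ⧸ q') (by linear_combination hπ)
          · exact one_ne_zero (α := (𝓞 K) ⧸ q') (by linear_combination -hπ)
          · exact one_ne_zero (α := (𝓞 K) ⧸ q') (by linear_combination -hπ)
          · refine h3F ?_
            push_cast
            linear_combination -hπ
        · -- a = 0, b ≥ 1
          have haz : a = 0 := by omega
          rw [hα, pow_zero, one_mul] at hmain
          -- show b = 1
          have hb1 : b.toNat = 1 := by
            by_contra hb2
            have hb2' : 2 ≤ b.toNat := by omega
            have hu4 : (u : 𝓞 K) - 1 ∈ Ideal.span {(4 : 𝓞 K)} := by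
              rw [Ideal.mem_span_singleton]
              have : (u : 𝓞 K) - 1 = -((2 : 𝓞 K) ^ (b.toNat) * w) := by
                linear_combination hmain
              rw [this, dvd_neg]
              have h4 : (4 : 𝓞 K) = (2 : 𝓞 K) ^ 2 := by norm_num
              rw [h4]
              exact (pow_dvd_pow (2 : 𝓞 K) hb2').mul_right _
            have hNu := my_norm_unit_eq_one u hu4
            have hπ := congrArg (Ideal.Quotient.mk q') hmain
            rw [map_add, map_one, hres u, hNu, map_mul, map_pow, hπ2] at hπ
            push_cast at hπ
            have hzero : ((2 : ℕ) : (𝓞 K) ⧸ q') ^ (b.toNat)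
                * Ideal.Quotient.mk q' (w : 𝓞 K) = 0 := by
              push_cast
              linear_combination hπ
            rcases mul_eq_zero.mp hzero with h0 | h0
            · exact h2F (pow_eq_zero_iff (by omega) |>.mp h0)
            · exact hunitres0 w h0
          have hbv : b = 1 := by omega
          rw [← ha, ← hb] at *
          rw [haz, hbv]
          norm_num
      · rcases Nat.eq_zero_or_pos (b.toNat) with hβ | hβ
        · -- b = 0, a ≥ 1 (symmetric)
          have hbz : b = 0 := by omega
          rw [hβ, pow_zero, one_mul] at hmain
          have ha1 : a.toNat = 1 := by
            by_contra ha2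
            have ha2' : 2 ≤ a.toNat := by omega
            have hw4 : (w : 𝓞 K) - 1 ∈ Ideal.span {(4 : 𝓞 K)} := by
              rw [Ideal.mem_span_singleton]
              have : (w : 𝓞 K) - 1 = -((2 : 𝓞 K) ^ (a.toNat) * u) := by
                linear_combination hmain
              rw [this, dvd_neg]
              have h4 : (4 : 𝓞 K) = (2 : 𝓞 K) ^ 2 := by norm_num
              rw [h4]
              exact (pow_dvd_pow (2 : 𝓞 K) ha2').mul_right _
            have hNw := my_norm_unit_eq_one w hw4
            have hπ := congrArg (Ideal.Quotient.mk q') hmain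
            rw [map_add, map_one, hres w, hNw, map_mul, map_pow, hπ2] at hπ
            push_cast at hπ
            have hzero : ((2 : ℕ) : (𝓞 K) ⧸ q') ^ (a.toNat)
                * Ideal.Quotient.mk q' (u : 𝓞 K) = 0 := by
              push_cast
              linear_combination hπ
            rcases mul_eq_zero.mp hzero with h0 | h0
            · exact h2F (pow_eq_zero_iff (by omega) |>.mp h0)
            · exact hunitres0 u h0
          have hav : a = 1 := by omega
          rw [hav, hbz]
          norm_num
        · -- both ≥ 1 : 1 ∈ q
          exfalso
          have h1q : (1 : 𝓞 K) ∈ q.asIdeal := by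
            rw [← hmain]
            exact Ideal.add_mem _
              (Ideal.mul_mem_right _ _ (Ideal.pow_mem_of_mem _ hq2mem _ hα))
              (Ideal.mul_mem_right _ _ (Ideal.pow_mem_of_mem _ hq2mem _ hβ))
          exact q.isPrime.ne_top ((Ideal.eq_top_iff_one _).mpr h1q)
    · -- b < 0 ≤ a : w ∈ q, contradiction
      exfalso
      push_neg at hb0
      have hmain := hmaster (-b) (by omega) (by omega) (by omega)
      rw [show b + -b = 0 by ring] at hmain
      simp only [Int.toNat_zero, pow_zero, one_mul] at hmain
      apply hunitq w
      have : (w : 𝓞 K) = (2 : 𝓞 K) ^ ((-b).toNat)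
          - (2 : 𝓞 K) ^ ((a + -b).toNat) * u := by
        linear_combination hmain
      rw [this]
      exact Ideal.sub_mem _
        (Ideal.pow_mem_of_mem _ hq2mem _ (by omega))
        (Ideal.mul_mem_right _ _ (Ideal.pow_mem_of_mem _ hq2mem _ (by omega)))
  · push_neg at ha0
    by_cases hb0 : 0 ≤ b
    · -- a < 0 ≤ b : u ∈ q, contradiction
      exfalso
      have hmain := hmaster (-a) (by omega) (by omega) (by omega)
      rw [show a + -a = 0 by ring] at hmain
      simp only [Int.toNat_zero, pow_zero, one_mul] at hmain
      apply hunitq u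
      have : (u : 𝓞 K) = (2 : 𝓞 K) ^ ((-a).toNat)
          - (2 : 𝓞 K) ^ ((b + -a).toNat) * w := by
        linear_combination hmain
      rw [this]
      exact Ideal.sub_mem _
        (Ideal.pow_mem_of_mem _ hq2mem _ (by omega))
        (Ideal.mul_mem_right _ _ (Ideal.pow_mem_of_mem _ hq2mem _ (by omega)))
    · -- both negative
      push_neg at hb0
      rcases lt_trichotomy a b with hab | hab | hab
      · -- a < b : u ∈ q
        exfalso
        have hmain := hmaster (-a) (by omega) (by omega) (by omega)
        rw [show a + -a = 0 by ring] at hmain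
        simp only [Int.toNat_zero, pow_zero, one_mul] at hmain
        apply hunitq u
        have : (u : 𝓞 K) = (2 : 𝓞 K) ^ ((-a).toNat)
            - (2 : 𝓞 K) ^ ((b + -a).toNat) * w := by
          linear_combination hmain
        rw [this]
        exact Ideal.sub_mem _
          (Ideal.pow_mem_of_mem _ hq2mem _ (by omega))
          (Ideal.mul_mem_right _ _ (Ideal.pow_mem_of_mem _ hq2mem _ (by omega)))
      · -- a = b < 0
        have hmain := hmaster (-a) (by omega) (by omega) (by omega)
        rw [show a + -a = 0 by ring, show b + -a = 0 by omega] at hmain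
        simp only [Int.toNat_zero, pow_zero, one_mul] at hmain
        set t : ℕ := (-a).toNat with ht
        have ht1 : 1 ≤ t := by omega
        have htval : t = 1 := by
          by_contra ht2
          have ht2' : 2 ≤ t := by omega
          -- ε = -w * u⁻¹
          set ε : (𝓞 K)ˣ := (-w) * u⁻¹ with hε
          have hεval : (ε : 𝓞 K) - 1 = -((2 : 𝓞 K) ^ t) * (u⁻¹ : (𝓞 K)ˣ) := by
            have hstep : ((ε : 𝓞 K) - 1) * (u : 𝓞 K)
                = (-((2 : 𝓞 K) ^ t) * (u⁻¹ : (𝓞 K)ˣ)) * (u : 𝓞 K) := by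
              rw [hε]
              have h1 : ((((-w) * u⁻¹ : (𝓞 K)ˣ) : 𝓞 K)) = -(w : 𝓞 K) * (u⁻¹ : (𝓞 K)ˣ) := by
                rw [Units.val_mul, Units.val_neg]
              rw [h1, sub_mul, mul_assoc, Units.inv_mul, mul_one, mul_assoc, Units.inv_mul,
                mul_one, one_mul]
              linear_combination -hmain
            have := congrArg (fun z => z * ((u⁻¹ : (𝓞 K)ˣ) : 𝓞 K)) hstep
            simpa [mul_assoc, Units.mul_inv] using this
          have hε4 : (ε : 𝓞 K) - 1 ∈ Ideal.span {(4 : 𝓞 K)} := by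
            rw [Ideal.mem_span_singleton, hεval]
            rw [neg_mul]
            rw [dvd_neg]
            have h4 : (4 : 𝓞 K) = (2 : 𝓞 K) ^ 2 := by norm_num
            rw [h4]
            exact (pow_dvd_pow (2 : 𝓞 K) ht2').mul_right _
          have hNε := my_norm_unit_eq_one ε hε4
          have hπε : Ideal.Quotient.mk q' (ε : 𝓞 K) = 1 := by
            rw [hres ε, hNε]
            push_cast
            ring
          -- π w = - π u
          have hπw : Ideal.Quotient.mk q' (w : 𝓞 K)
              = -(Ideal.Quotient.mk q' (u : 𝓞 K)) := by
            have h1 : ((((-w) * u⁻¹ : (𝓞 K)ˣ) : 𝓞 K)) = -(w : 𝓞 K) * (u⁻¹ : (𝓞 K)ˣ) := by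
              rw [Units.val_mul, Units.val_neg]
            rw [hε, h1] at hπε
            have h2 := congrArg (fun z => z * Ideal.Quotient.mk q' ((u : 𝓞 K))) hπε
            simp only [map_mul, map_neg, one_mul] at h2
            rw [mul_assoc, ← map_mul, Units.inv_mul, map_one, mul_one] at h2
            linear_combination -h2
          have hπ := congrArg (Ideal.Quotient.mk q') hmain
          rw [map_add, hπw, map_pow, hπ2, add_neg_cancel] at hπ
          have h20 : ((2 : ℕ) : (𝓞 K) ⧸ q') = 0 :=
            pow_eq_zero_iff (by omega) |>.mp hπ.symm
          exact h2F h20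
        have hav : a = -1 := by omega
        have hbv : b = -1 := by omega
        rw [hav, hbv]
        norm_num
      · -- b < a : w ∈ q
        exfalso
        have hmain := hmaster (-b) (by omega) (by omega) (by omega)
        rw [show b + -b = 0 by ring] at hmain
        simp only [Int.toNat_zero, pow_zero, one_mul] at hmain
        apply hunitq w
        have : (w : 𝓞 K) = (2 : 𝓞 K) ^ ((-b).toNat)
            - (2 : 𝓞 K) ^ ((a + -b).toNat) * u := by
          linear_combination hmain
        rw [this]
        exact Ideal.sub_mem _
          (Ideal.pow_mem_of_mem _ hq2mem _ (by omega))
          (Ideal.mul_mem_right _ _ (Ideal.pow_mem_of_mem _ hq2mem _ (by omega)))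
end

section
/- Let K be a number field, p a prime, r ∈ ℕ, and let (a, b, c) ∈ O_K³ be a non-trivial solution of a^p + b^p = 2^r c^p. Let E be the Weierstrass curve Y² = X(X − a^p)(X + b^p) with discriminant Δ_E = 2^{4+2r}(abc)^{2p} and c₄ = 2^4(a^{2p} + 2^r b^p c^p). Let q be a prime ideal of O_K with q ∤ 2 such that q divides exactly one of a, b, c. Then v_q(c₄) = 0 and v_q(Δ_E) = 2p·v_q(abc); in particular p divides v_q(Δ_E). -/
open NumberField IsDedekindDomain

section Helpers

variable {K : Type} [Field K] [NumberField K] (q : HeightOneSpectrum (𝓞 K))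

lemma vP_eq_zero_of_not_mem (x : 𝓞 K) (hx : x ∉ q.asIdeal) :
    vP q (algebraMap (𝓞 K) K x) = 0 := by
  have hx0 : x ≠ 0 := fun h => hx (h ▸ q.asIdeal.zero_mem)
  have hK : (algebraMap (𝓞 K) K x) ≠ 0 := by
    simpa using hx0
  have hval : q.valuation K (algebraMap (𝓞 K) K x) = 1 := by
    rw [IsDedekindDomain.HeightOneSpectrum.valuation_of_algebraMap]
    rw [IsDedekindDomain.HeightOneSpectrum.intValuation_apply]
    refine le_antisymm (q.intValuation_le_one x) (not_lt.mp ?_)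
    rw [← IsDedekindDomain.HeightOneSpectrum.intValuation_apply,
      IsDedekindDomain.HeightOneSpectrum.intValuation_lt_one_iff_dvd]
    exact fun h => hx (Ideal.dvd_span_singleton.mp h)
  rw [vP, dif_neg hK]
  have : WithZero.unzero ((q.valuation K).ne_zero_iff.mpr hK) = 1 := by
    have h1 := WithZero.coe_unzero ((q.valuation K).ne_zero_iff.mpr hK)
    exact_mod_cast h1.trans hval
  rw [this]
  simp

lemma vP_mul (x y : K) (hx : x ≠ 0) (hy : y ≠ 0) :
    vP q (x * y) = vP q x + vP q y := by
  have hxy : x * y ≠ 0 := mul_ne_zero hx hy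
  rw [vP, vP, vP, dif_neg hxy, dif_neg hx, dif_neg hy]
  have : WithZero.unzero ((q.valuation K).ne_zero_iff.mpr hxy) =
      WithZero.unzero ((q.valuation K).ne_zero_iff.mpr hx) *
      WithZero.unzero ((q.valuation K).ne_zero_iff.mpr hy) := by
    have h1 := WithZero.coe_unzero ((q.valuation K).ne_zero_iff.mpr hxy)
    have h2 := WithZero.coe_unzero ((q.valuation K).ne_zero_iff.mpr hx)
    have h3 := WithZero.coe_unzero ((q.valuation K).ne_zero_iff.mpr hy)
    have : (q.valuation K) (x*y) = q.valuation K x * q.valuation K y := map_mul _ _ _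
    rw [← h1, ← h2, ← h3] at this
    exact_mod_cast this
  rw [this]
  simp [toAdd_mul]
  ring

lemma vP_pow (x : K) (hx : x ≠ 0) (n : ℕ) : vP q (x ^ n) = n * vP q x := by
  induction n with
  | zero =>
    simp only [pow_zero, Nat.cast_zero, zero_mul]
    have : (1:K) ≠ 0 := one_ne_zero
    rw [vP, dif_neg this]
    have h1 : WithZero.unzero ((q.valuation K).ne_zero_iff.mpr this) = 1 := by
      have h2 := WithZero.coe_unzero ((q.valuation K).ne_zero_iff.mpr this)
      exact_mod_cast h2.trans (map_one (q.valuation K))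
    rw [h1]
    simp
  | succ n ih =>
    rw [pow_succ, vP_mul q _ _ (pow_ne_zero _ hx) hx, ih]
    push_cast; ring

end Helpers

/-- **Multiplicative reduction data of the Frey curve at odd primes**. If `(a,b,c)` is a
non-trivial solution of `aᵖ + bᵖ = 2^r cᵖ` over a number field `K` and `q ∤ 2` is a prime
ideal dividing exactly one of `a`, `b`, `c`, then for the Frey curve
`Y² = X(X - aᵖ)(X + bᵖ)` one has `v_q(c₄) = 0` and `v_q(Δ_E) = 2p·v_q(abc)`; in
particular `p ∣ v_q(Δ_E)`. -/
theorem frey_curve_valuation_at_odd_primes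
    (K : Type) [Field K] [NumberField K]
    (p : ℕ) (hp : p.Prime) (r : ℕ) (a b c : 𝓞 K)
    (hsol : a ^ p + b ^ p = 2 ^ r * c ^ p)
    (hnontriv : ¬ (a * b * c = 0 ∨ a = b ∨ a = -b))
    (W : WeierstrassCurve (𝓞 K))
    (hW : W = { a₁ := 0, a₂ := b ^ p - a ^ p, a₃ := 0, a₄ := -(a ^ p * b ^ p), a₆ := 0 })
    (q : HeightOneSpectrum (𝓞 K)) (hq2 : (2 : 𝓞 K) ∉ q.asIdeal)
    (hexactlyOne :
      (a ∈ q.asIdeal ∧ b ∉ q.asIdeal ∧ c ∉ q.asIdeal) ∨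
      (a ∉ q.asIdeal ∧ b ∈ q.asIdeal ∧ c ∉ q.asIdeal) ∨
      (a ∉ q.asIdeal ∧ b ∉ q.asIdeal ∧ c ∈ q.asIdeal)) :
    vP q (algebraMap (𝓞 K) K W.c₄) = 0 ∧
    vP q (algebraMap (𝓞 K) K W.Δ) = 2 * p * vP q (algebraMap (𝓞 K) K (a * b * c)) ∧
    (p : ℤ) ∣ vP q (algebraMap (𝓞 K) K W.Δ) := by
  have habc : a * b * c ≠ 0 := fun h => hnontriv (Or.inl h)
  have hprime : q.asIdeal.IsPrime := q.isPrime
  have hppos : 0 < p := hp.pos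
  -- the two algebraic identities
  have hΔ : W.Δ = 2 ^ (2*r+4) * (a*b*c)^(2*p) := by
    subst hW
    simp only [WeierstrassCurve.Δ, WeierstrassCurve.b₂, WeierstrassCurve.b₄,
      WeierstrassCurve.b₆, WeierstrassCurve.b₈]
    linear_combination (16 * a^(2*p) * b^(2*p) * (a^p + b^p + 2^r * c^p)) * hsol
  have hc₄ : W.c₄ = 16 * (a^(2*p) + a^p*b^p + b^(2*p)) := by
    subst hW
    simp only [WeierstrassCurve.c₄, WeierstrassCurve.b₂, WeierstrassCurve.b₄]
    ring
  -- `c₄` is not in `q`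
  have h16 : (16 : 𝓞 K) ∉ q.asIdeal := by
    intro h
    have : (16 : 𝓞 K) = 2 ^ 4 := by norm_num
    rw [this] at h
    exact hq2 (hprime.mem_of_pow_mem 4 h)
  have hS : (a^(2*p) + a^p*b^p + b^(2*p)) ∉ q.asIdeal := by
    intro hS
    rcases hexactlyOne with ⟨ha, hb, hc⟩ | ⟨ha, hb, hc⟩ | ⟨ha, hb, hc⟩
    · have h1 : a^(2*p) ∈ q.asIdeal := Ideal.pow_mem_of_mem _ ha _ (by omega)
      have h2 : a^p*b^p ∈ q.asIdeal :=
        Ideal.mul_mem_right _ _ (Ideal.pow_mem_of_mem _ ha _ hppos)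
      have h3 : b^(2*p) ∈ q.asIdeal := by
        have heq : b^(2*p) = (a^(2*p) + a^p*b^p + b^(2*p)) - a^(2*p) - a^p*b^p := by ring
        rw [heq]
        exact q.asIdeal.sub_mem (q.asIdeal.sub_mem hS h1) h2
      exact hb (hprime.mem_of_pow_mem _ h3)
    · have h1 : b^(2*p) ∈ q.asIdeal := Ideal.pow_mem_of_mem _ hb _ (by omega)
      have h2 : a^p*b^p ∈ q.asIdeal :=
        Ideal.mul_mem_left _ _ (Ideal.pow_mem_of_mem _ hb _ hppos)
      have h3 : a^(2*p) ∈ q.asIdeal := by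
        have heq : a^(2*p) = (a^(2*p) + a^p*b^p + b^(2*p)) - b^(2*p) - a^p*b^p := by ring
        rw [heq]
        exact q.asIdeal.sub_mem (q.asIdeal.sub_mem hS h1) h2
      exact ha (hprime.mem_of_pow_mem _ h3)
    · have hsum : a^p + b^p ∈ q.asIdeal := by
        rw [hsol]
        exact Ideal.mul_mem_left _ _ (Ideal.pow_mem_of_mem _ hc _ hppos)
      have h2 : b^p*(a^p + b^p) ∈ q.asIdeal := Ideal.mul_mem_left _ _ hsum
      have h3 : a^(2*p) ∈ q.asIdeal := by
        have heq : a^(2*p) = (a^(2*p) + a^p*b^p + b^(2*p)) - b^p*(a^p + b^p) := by ring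
        rw [heq]
        exact q.asIdeal.sub_mem hS h2
      exact ha (hprime.mem_of_pow_mem _ h3)
  have hc₄mem : W.c₄ ∉ q.asIdeal := by
    rw [hc₄]
    intro h
    rcases hprime.mem_or_mem h with h | h
    · exact h16 h
    · exact hS h
  refine ⟨vP_eq_zero_of_not_mem q _ hc₄mem, ?_, ?_⟩
  · -- valuation of Δ
    have h2ne : (algebraMap (𝓞 K) K) (2 : 𝓞 K) ≠ 0 := by
      simp
    have habcne : (algebraMap (𝓞 K) K) (a*b*c) ≠ 0 := by
      simpa using habc
    rw [hΔ, map_mul, map_pow, map_pow]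
    rw [vP_mul q _ _ (pow_ne_zero _ h2ne) (pow_ne_zero _ habcne),
      vP_pow q _ h2ne, vP_pow q _ habcne, vP_eq_zero_of_not_mem q _ hq2]
    push_cast
    ring
  · have h2ne : (algebraMap (𝓞 K) K) (2 : 𝓞 K) ≠ 0 := by
      simp
    have habcne : (algebraMap (𝓞 K) K) (a*b*c) ≠ 0 := by
      simpa using habc
    rw [hΔ, map_mul, map_pow, map_pow]
    rw [vP_mul q _ _ (pow_ne_zero _ h2ne) (pow_ne_zero _ habcne),
      vP_pow q _ h2ne, vP_pow q _ habcne, vP_eq_zero_of_not_mem q _ hq2]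
    refine ⟨2 * vP q ((algebraMap (𝓞 K) K) (a*b*c)), ?_⟩
    push_cast
    ring
end

section
/- Let K be a number field and let S_K be the set of prime ideals of O_K dividing 2. Let λ ∈ K with λ ≠ 0 and λ ≠ 1, and suppose that j := 2^8 (λ² − λ + 1)³ / (λ²(1 − λ)²) lies in the ring of S_K-integers O_{S_K}. Then λ ∈ O_{S_K}^* and 1 − λ ∈ O_{S_K}^*, i.e. λ and μ := 1 − λ are S_K-units satisfying the S_K-unit equation λ + μ = 1. -/
open NumberField IsDedekindDomain

/-- Auxiliary: the exponential from `ℤ` to `ℤₘ₀`. -/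
noncomputable def eA (m : ℤ) : WithZero (Multiplicative ℤ) :=
  ((Multiplicative.ofAdd m : Multiplicative ℤ) : WithZero (Multiplicative ℤ))

lemma eA_mul (m n : ℤ) : eA (m + n) = eA m * eA n := by
  simp [eA, ofAdd_add]

lemma eA_inj {m n : ℤ} : eA m = eA n ↔ m = n := by
  simp [eA, WithZero.coe_inj]

lemma eA_sq (m : ℤ) : eA m ^ 2 = eA (2 * m) := by
  rw [pow_two, ← eA_mul, two_mul]

lemma eA_cube (m : ℤ) : eA m ^ 3 = eA (3 * m) := by
  rw [pow_succ, pow_two, ← eA_mul, ← eA_mul, eA_inj]; ring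

lemma eA_le {m n : ℤ} : eA m ≤ eA n ↔ m ≤ n := by
  simp [eA, WithZero.coe_le_coe, Multiplicative.ofAdd_le]

lemma eA_lt {m n : ℤ} : eA m < eA n ↔ m < n := by
  simp [eA, WithZero.coe_lt_coe, Multiplicative.ofAdd_lt]

lemma eA_zero : eA 0 = 1 := by simp [eA]

/-- **Legendre `λ`-invariants are `S_K`-units when the `j`-invariant is an `S_K`-integer**.
If `λ ∈ K \ {0, 1}` and `j = 2⁸(λ² - λ + 1)³/(λ²(1 - λ)²)` lies in the ring of
`S_K`-integers, then `λ` and `μ := 1 - λ` are `S_K`-units satisfying `λ + μ = 1`. -/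
theorem legendre_lambda_is_S_unit
    (K : Type) [Field K] [NumberField K]
    (SK : Set (HeightOneSpectrum (𝓞 K)))
    (hSK : SK = {P : HeightOneSpectrum (𝓞 K) | (2 : 𝓞 K) ∈ P.asIdeal})
    (lam : K) (hlam0 : lam ≠ 0) (hlam1 : lam ≠ 1)
    (j : K) (hj : j = 2 ^ 8 * (lam ^ 2 - lam + 1) ^ 3 / (lam ^ 2 * (1 - lam) ^ 2))
    (hjint : j ∈ SK.integer K) :
    (∃ u : Kˣ, (u : K) = lam ∧ u ∈ SK.unit K) ∧
    (∃ u : Kˣ, (u : K) = 1 - lam ∧ u ∈ SK.unit K) := by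
  have hμ0 : (1 : K) - lam ≠ 0 := sub_ne_zero.mpr (Ne.symm hlam1)
  have key : ∀ v : HeightOneSpectrum (𝓞 K), v ∉ SK →
      (v.valuation K) lam = 1 ∧ (v.valuation K) (1 - lam) = 1 := by
    intro v hv
    -- valuation of 2 is 1
    have h2O : (2 : 𝓞 K) ∉ v.asIdeal := by
      rw [hSK] at hv; exact hv
    have h2 : (v.valuation K) (2 : K) = 1 := by
      have halg : (algebraMap (𝓞 K) K) (2 : 𝓞 K) = (2 : K) := map_ofNat _ 2
      rw [← halg]
      refine le_antisymm (v.valuation_le_one _) (not_lt.mp fun h => h2O ?_)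
      exact (Ideal.dvd_span_singleton).mp ((v.valuation_lt_one_iff_dvd _).mp h)
    have hjle : (v.valuation K) j ≤ 1 := SK.integer_valuation_le_one K ⟨j, hjint⟩ hv
    have ha0 : (v.valuation K) lam ≠ 0 := (Valuation.ne_zero_iff _).mpr hlam0
    have hb0 : (v.valuation K) (1 - lam) ≠ 0 := (Valuation.ne_zero_iff _).mpr hμ0
    set A : ℤ := Multiplicative.toAdd (WithZero.unzero ha0) with hAdef
    set B : ℤ := Multiplicative.toAdd (WithZero.unzero hb0) with hBdef
    have hA : (v.valuation K) lam = eA A := by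
      rw [eA, hAdef, ofAdd_toAdd, WithZero.coe_unzero]
    have hB : (v.valuation K) (1 - lam) = eA B := by
      rw [eA, hBdef, ofAdd_toAdd, WithZero.coe_unzero]
    have hone : (v.valuation K) (1 : K) = eA 0 := by rw [map_one, eA_zero]
    suffices hAB : A = 0 ∧ B = 0 by
      rw [hA, hB, hAB.1, hAB.2, eA_zero]; exact ⟨rfl, rfl⟩
    have heq : j * (lam ^ 2 * (1 - lam) ^ 2) = 2 ^ 8 * (lam ^ 2 - lam + 1) ^ 3 := by
      rw [hj]; field_simp
    by_cases hc : lam ^ 2 - lam + 1 = 0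
    · -- λ is a primitive sixth root of unity
      have h1 : lam * (lam - 1) = -1 := by linear_combination hc
      have h2' : lam ^ 2 = lam - 1 := by linear_combination hc
      have hv1 : (v.valuation K) (lam - 1) = eA B := by
        rw [show lam - 1 = -(1 - lam) by ring, Valuation.map_neg, hB]
      have hab : eA (A + B) = eA 0 := by
        rw [eA_mul, ← hA, ← hv1, ← Valuation.map_mul, h1, Valuation.map_neg, map_one, eA_zero]
      have h2a : eA (2 * A) = eA B := by
        rw [← eA_sq, ← hA, ← hv1, ← map_pow, h2']
      rw [eA_inj] at hab h2a
      constructor <;> omega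
    · have hc0 : (v.valuation K) (lam ^ 2 - lam + 1) ≠ 0 := (Valuation.ne_zero_iff _).mpr hc
      set C : ℤ := Multiplicative.toAdd (WithZero.unzero hc0) with hCdef
      have hC : (v.valuation K) (lam ^ 2 - lam + 1) = eA C := by
        rw [eA, hCdef, ofAdd_toAdd, WithZero.coe_unzero]
      have hj0 : j ≠ 0 := by
        rw [hj]
        exact div_ne_zero (mul_ne_zero (by norm_num) (pow_ne_zero _ hc))
          (mul_ne_zero (pow_ne_zero _ hlam0) (pow_ne_zero _ hμ0))
      have hjne : (v.valuation K) j ≠ 0 := (Valuation.ne_zero_iff _).mpr hj0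
      set J : ℤ := Multiplicative.toAdd (WithZero.unzero hjne) with hJdef
      have hJ : (v.valuation K) j = eA J := by
        rw [eA, hJdef, ofAdd_toAdd, WithZero.coe_unzero]
      have hJle : J ≤ 0 := by
        rw [← eA_le, eA_zero, ← hJ]; exact hjle
      have hmain : J + (2 * A + 2 * B) = 3 * C := by
        have hval := congrArg (v.valuation K) heq
        rw [map_mul, map_mul, map_mul, map_pow, map_pow, map_pow, map_pow, h2,
          one_pow, one_mul, hA, hB, hC, hJ, eA_sq, eA_sq, eA_cube,
          ← eA_mul, ← eA_mul] at hval
        exact eA_inj.mp hval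
      -- trichotomy on A
      rcases lt_trichotomy A 0 with hA0 | hA0 | hA0
      · -- A < 0 : impossible
        have hBeq : B = 0 := by
          have hne : (v.valuation K) (1 : K) ≠ (v.valuation K) (-lam) := by
            rw [Valuation.map_neg, hone, hA]
            exact ne_of_gt (eA_lt.mpr hA0)
          have := Valuation.map_add_of_distinct_val (v.valuation K) hne
          rw [show (1 : K) + -lam = 1 - lam by ring, hone, Valuation.map_neg, hA, hB,
            max_eq_left (eA_le.mpr hA0.le)] at this
          exact eA_inj.mp this
        have hCeq : C = 0 := by
          have hle : (v.valuation K) (lam ^ 2 - lam) < (v.valuation K) (1 : K) := by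
            calc (v.valuation K) (lam ^ 2 - lam) ≤ max ((v.valuation K) (lam ^ 2))
                  ((v.valuation K) lam) := Valuation.map_sub (v.valuation K) _ _
              _ ≤ eA A := by
                  rw [map_pow, hA, eA_sq]
                  exact max_le (eA_le.mpr (by omega)) le_rfl
              _ < (v.valuation K) (1 : K) := by rw [hone]; exact eA_lt.mpr hA0
          have := Valuation.map_add_of_distinct_val (v.valuation K) (ne_of_lt hle)
          rw [max_eq_right hle.le, hone] at this
          exact eA_inj.mp (hC ▸ this)
        omega
      · -- A = 0
        rcases lt_trichotomy B 0 with hB0 | hB0 | hB0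
        · -- B < 0 : impossible
          have hCeq : C = 0 := by
            have hle : (v.valuation K) (lam ^ 2 - lam) < (v.valuation K) (1 : K) := by
              rw [show lam ^ 2 - lam = lam * (lam - 1) by ring, map_mul, hA, hA0,
                eA_zero, one_mul, show lam - 1 = -(1 - lam) by ring,
                Valuation.map_neg, hB, hone]
              exact eA_lt.mpr hB0
            have := Valuation.map_add_of_distinct_val (v.valuation K) (ne_of_lt hle)
            rw [max_eq_right hle.le, hone] at this
            exact eA_inj.mp (hC ▸ this)
          omega
        · exact ⟨hA0, hB0⟩
        · -- B > 0 : impossible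
          exfalso
          have : (v.valuation K) (1 - lam) ≤ eA 0 := by
            calc (v.valuation K) (1 - lam) ≤ max ((v.valuation K) (1 : K)) ((v.valuation K) lam) :=
                Valuation.map_sub (v.valuation K) _ _
              _ ≤ eA 0 := by rw [hone, hA, hA0]; exact max_le le_rfl le_rfl
          rw [hB, eA_le] at this
          omega
      · -- A > 0 : impossible
        have hBeq : B = A := by
          have hne : (v.valuation K) (1 : K) ≠ (v.valuation K) (-lam) := by
            rw [Valuation.map_neg, hone, hA]
            exact ne_of_lt (eA_lt.mpr hA0)
          have := Valuation.map_add_of_distinct_val (v.valuation K) hne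
          rw [show (1 : K) + -lam = 1 - lam by ring, hone, Valuation.map_neg, hA, hB,
            max_eq_right (eA_le.mpr hA0.le)] at this
          exact eA_inj.mp this
        have hCeq : C = 2 * A := by
          have hlt : (v.valuation K) (1 - lam) < (v.valuation K) (lam ^ 2) := by
            rw [map_pow, hA, eA_sq, hB, hBeq]
            exact eA_lt.mpr (by omega)
          have := Valuation.map_add_of_distinct_val (v.valuation K) (ne_of_gt hlt)
          rw [max_eq_left hlt.le, show lam ^ 2 + (1 - lam) = lam ^ 2 - lam + 1 by ring,
            map_pow, hA, eA_sq, hC] at this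
          exact eA_inj.mp this
        omega
  refine ⟨⟨Units.mk0 lam hlam0, rfl, fun v hv => (key v hv).1⟩,
    ⟨Units.mk0 (1 - lam) hμ0, rfl, fun v hv => (key v hv).2⟩⟩
end
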